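/- For every integer k ≥ 2, H(n,2k) ≥ n^{(1/k)n − o(n)}; precisely, for every ε > 0 there exists N such that for all n ≥ N, H(n,2k) ≥ n^{(1/k − ε)n}. -/

import Mathlib

open SimpleGraph

/-- `G` contains a cycle of length `k` as a subgraph. -/
def ContainsCycleLen {V : Type*} (G : SimpleGraph V) (k : ℕ) : Prop :=
  ∃ (u : V) (w : G.Walk u u), w.IsCycle ∧ w.length = k

/-- `H` is a Hamiltonian path of the complete graph on `Fin n`:
it is the path graph on `n` vertices up to a relabeling of the vertices. -/
def IsHamPathGraph {n : ℕ} (H : SimpleGraph (Fin n)) : Prop :=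
  ∃ σ : Equiv.Perm (Fin n), ∀ a b, H.Adj a b ↔ (pathGraph n).Adj (σ a) (σ b)

/-- The maximum size of a family of Hamiltonian paths of `K_n` that are
pairwise `C_k`-creating. -/
noncomputable def Hnum (n k : ℕ) : ℕ :=
  sSup {m | ∃ F : Finset (SimpleGraph (Fin n)), F.card = m ∧
    (∀ G ∈ F, IsHamPathGraph G) ∧
    ∀ G₁ ∈ F, ∀ G₂ ∈ F, G₁ ≠ G₂ → ContainsCycleLen (G₁ ⊔ G₂) k}

/-- `H` is a perfect matching (as a graph): every vertex has a unique neighbor. -/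
def IsPMGraph {V : Type*} (H : SimpleGraph V) : Prop :=
  ∀ v : V, ∃! w : V, H.Adj v w

/-- The maximum size of a family of perfect matchings of `K_n` that are
pairwise `C_k`-creating. -/
noncomputable def Mnum (n k : ℕ) : ℕ :=
  sSup {m | ∃ F : Finset (SimpleGraph (Fin n)), F.card = m ∧
    (∀ G ∈ F, IsPMGraph G) ∧
    ∀ G₁ ∈ F, ∀ G₂ ∈ F, G₁ ≠ G₂ → ContainsCycleLen (G₁ ⊔ G₂) k}

variable {V : Type*} {G : SimpleGraph V}

/-- A straight walk along `f a, f (a+1), ..., f (a+l)`. -/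
def chainWalk (G : SimpleGraph V) (f : ℕ → V) :
    (l : ℕ) → (a : ℕ) → (∀ t, a ≤ t → t < a + l → G.Adj (f t) (f (t+1))) →
      G.Walk (f a) (f (a + l))
  | 0, a, _ => Walk.nil
  | (l+1), a, h =>
      Walk.cons (h a le_rfl (by omega))
        ((chainWalk G f l (a+1) (fun t h1 h2 => h t (by omega) (by omega))).copy rfl
          (by congr 1; omega))

@[simp] lemma chainWalk_length (f : ℕ → V) (l a : ℕ) (h) :
    (chainWalk G f l a h).length = l := by
  induction l generalizing a with
  | zero => rfl
  | succ l ih => simp [chainWalk, ih]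

lemma chainWalk_support (f : ℕ → V) (l a : ℕ) (h) :
    (chainWalk G f l a h).support = (List.range' a (l+1)).map f := by
  induction l generalizing a with
  | zero => simp [chainWalk]
  | succ l ih =>
      rw [chainWalk]
      simp only [Walk.support_cons, Walk.support_copy, ih]
      rw [List.range'_succ, List.map_cons, List.range'_succ, List.map_cons,
        List.range'_succ, List.map_cons]

lemma chainWalk_edges (f : ℕ → V) (l a : ℕ) (h) :
    (chainWalk G f l a h).edges = (List.range' a l).map (fun t => s(f t, f (t+1))) := by
  induction l generalizing a with
  | zero => simp [chainWalk]
  | succ l ih =>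
      rw [chainWalk]
      simp only [Walk.edges_cons, Walk.edges_copy, ih]
      rw [List.range'_succ, List.map_cons]

/-- From a cyclically listed sequence of adjacent, internally distinct vertices,
get a cycle. -/
lemma exists_cycle_of_seq (g : ℕ → V) (L : ℕ) (hL : 3 ≤ L)
    (hadj : ∀ t, t < L → G.Adj (g t) (g (t+1)))
    (hclosed : g L = g 0)
    (hinj : ∀ t1 t2, 1 ≤ t1 → t1 ≤ L → 1 ≤ t2 → t2 ≤ L → g t1 = g t2 → t1 = t2) :
    ∃ w : G.Walk (g 0) (g 0), w.IsCycle ∧ w.length = L := by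
  have h1L : 1 ≤ L := by omega
  have hadj' : ∀ t, 1 ≤ t → t < 1 + (L - 1) → G.Adj (g t) (g (t+1)) := by
    intro t h1 h2; exact hadj t (by omega)
  set p0 : G.Walk (g 1) (g 0) :=
    (chainWalk G g (L-1) 1 hadj').copy rfl
      (by rw [show 1 + (L-1) = L by omega, hclosed]) with hp0
  have hsup : p0.support = (List.range' 1 L).map g := by
    rw [hp0, Walk.support_copy, chainWalk_support]
    congr 2
    omega
  have hedg : p0.edges = (List.range' 1 (L-1)).map (fun t => s(g t, g (t+1))) := by
    rw [hp0, Walk.edges_copy, chainWalk_edges]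
  refine ⟨Walk.cons (hadj 0 (by omega)) p0, ?_, ?_⟩
  · rw [Walk.cons_isCycle_iff]
    constructor
    · apply Walk.IsPath.mk'
      rw [hsup]
      refine List.Nodup.map_on ?_ (List.nodup_range' 1 Nat.one_pos)
      intro t1 h1 t2 h2 he
      rw [List.mem_range'] at h1 h2
      exact hinj t1 t2 (by omega) (by omega) (by omega) (by omega) he
    · rw [hedg]
      intro hmem
      rw [List.mem_map] at hmem
      obtain ⟨t, ht, hst⟩ := hmem
      rw [List.mem_range'] at ht
      rw [Sym2.eq_iff] at hst
      rcases hst with ⟨h1, h2⟩ | ⟨h1, h2⟩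
      · have : t = L := hinj t L (by omega) (by omega) (by omega) (by omega) (by rw [h1, hclosed])
        omega
      · have ht1 : t = 1 := hinj t 1 (by omega) (by omega) (by omega) (by omega) h1
        have : t + 1 = L := hinj (t+1) L (by omega) (by omega) (by omega) (by omega)
          (by rw [h2, hclosed])
        omega
  · simp [Walk.length_cons, hp0]
    omega

section Construction

variable (k m : ℕ)

/-- Extend a permutation of `Fin m` to `ℕ` by the identity. -/
def extPerm (σ : Equiv.Perm (Fin m)) : ℕ → ℕ :=
  fun i => if h : i < m then ((σ ⟨i, h⟩) : ℕ) else i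

lemma extPerm_lt (σ : Equiv.Perm (Fin m)) {i : ℕ} (h : i < m) : extPerm m σ i < m := by
  simp only [extPerm, dif_pos h]
  exact (σ ⟨i, h⟩).isLt

lemma extPerm_inj (σ : Equiv.Perm (Fin m)) : Function.Injective (extPerm m σ) := by
  intro a b h
  unfold extPerm at h
  split_ifs at h with h1 h2 h2
  · have : σ ⟨a, h1⟩ = σ ⟨b, h2⟩ := Fin.ext h
    have := σ.injective this
    exact congrArg Fin.val this
  · exact absurd ((σ ⟨a, h1⟩).isLt.trans_le (h ▸ le_of_not_gt h2)) (lt_irrefl _)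
  · exact absurd ((σ ⟨b, h2⟩).isLt.trans_le (h ▸ le_of_not_gt h1)) (lt_irrefl _)
  · exact h

/-- The position-to-vertex map of the Hamiltonian path associated to `σ`. -/
def FF (σ : Equiv.Perm (Fin m)) (p : ℕ) : ℕ :=
  if p ≤ m * k then
    (if p % k = 0 then p / k else m + 1 + (extPerm m σ (p / k)) * (k - 1) + (p % k - 1))
  else p

lemma FF_spine (hk : 2 ≤ k) (σ : Equiv.Perm (Fin m)) {i : ℕ} (hi : i ≤ m) :
    FF k m σ (k * i) = i := by
  have h1 : k * i ≤ m * k := by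
    calc k * i ≤ k * m := Nat.mul_le_mul_left k hi
    _ = m * k := mul_comm k m
  have h2 : (k * i) % k = 0 := Nat.mul_mod_right k i
  have h3 : (k * i) / k = i := Nat.mul_div_cancel_left i (by omega)
  simp [FF, h1, h2, h3]

lemma FF_block (hk : 2 ≤ k) (σ : Equiv.Perm (Fin m)) {i j : ℕ} (hi : i < m) (hj : j ≤ k - 2) :
    FF k m σ (k * i + 1 + j) = m + 1 + (extPerm m σ i) * (k - 1) + j := by
  have hjk : 1 + j < k := by omega
  have hp : k * i + 1 + j = k * i + (1 + j) := by omega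
  have h2 : (k * i + 1 + j) % k = 1 + j := by
    rw [hp, Nat.mul_add_mod, Nat.mod_eq_of_lt hjk]
  have h3 : (k * i + 1 + j) / k = i := by
    rw [hp, Nat.mul_add_div (show 0 < k by omega), Nat.div_eq_of_lt hjk, add_zero]
  have h1 : k * i + 1 + j ≤ m * k := by
    have ha : k * i + 1 + j ≤ k * i + k := by omega
    have h4 : k * i + k = k * (i+1) := by ring
    have h5 : k * (i+1) ≤ k * m := Nat.mul_le_mul_left k hi
    have h6 : k * m = m * k := mul_comm k m
    omega
  rw [FF, if_pos h1, if_neg (by omega), h2, h3]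
  omega

lemma FF_tail (σ : Equiv.Perm (Fin m)) {p : ℕ} (hp : m * k < p) : FF k m σ p = p := by
  rw [FF, if_neg (by omega)]

lemma mk_identity (hk : 2 ≤ k) (hm : 1 ≤ m) :
    m + 1 + (m - 1) * (k - 1) + (k - 2) = m * k := by
  obtain ⟨m', rfl⟩ : ∃ m', m = m' + 1 := ⟨m - 1, by omega⟩
  obtain ⟨k', rfl⟩ : ∃ k', k = k' + 2 := ⟨k - 2, by omega⟩
  rw [show m' + 1 - 1 = m' from rfl, show k' + 2 - 1 = k' + 1 from rfl,
    show k' + 2 - 2 = k' from rfl]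
  ring

lemma FF_block_le (hk : 2 ≤ k) {b j : ℕ} (hb : b < m) (hj : j ≤ k - 2) :
    m + 1 + b * (k - 1) + j ≤ m * k := by
  have h1 : b * (k-1) ≤ (m-1) * (k-1) := Nat.mul_le_mul_right _ (by omega)
  have h2 := mk_identity k m hk (by omega)
  omega

lemma FF_le (hk : 2 ≤ k) (σ : Equiv.Perm (Fin m)) {p : ℕ} (hp : p ≤ m * k) :
    FF k m σ p ≤ m * k := by
  rw [FF, if_pos hp]
  split_ifs with h
  · exact le_trans (Nat.div_le_self p k) hp
  · have hdiv : p / k < m := by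
      rcases Nat.lt_or_ge (p / k) m with h' | h'
      · exact h'
      · exfalso
        have h1 : m * k ≤ (p / k) * k := Nat.mul_le_mul_right k h'
        have h2 : (p / k) * k ≤ p := Nat.div_mul_le_self p k
        have h3 : p = m * k := le_antisymm hp (le_trans h1 h2)
        rw [h3, mul_comm] at h
        exact h (Nat.mul_mod_right k m)
    have hjj : p % k - 1 ≤ k - 2 := by
      have := Nat.mod_lt p (show 0 < k by omega)
      omega
    exact FF_block_le k m hk (extPerm_lt m σ hdiv) hjj

lemma blockDecode (hk : 2 ≤ k) {b1 j1 b2 j2 : ℕ} (h1 : j1 < k - 1) (h2 : j2 < k - 1)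
    (h : b1 * (k-1) + j1 = b2 * (k-1) + j2) : b1 = b2 ∧ j1 = j2 := by
  have e1 : (b1 * (k-1) + j1) / (k-1) = b1 := by
    rw [mul_comm, Nat.mul_add_div (by omega), Nat.div_eq_of_lt h1, add_zero]
  have e2 : (b2 * (k-1) + j2) / (k-1) = b2 := by
    rw [mul_comm, Nat.mul_add_div (by omega), Nat.div_eq_of_lt h2, add_zero]
  have hb : b1 = b2 := by rw [← e1, ← e2, h]
  refine ⟨hb, ?_⟩
  subst hb
  omega

lemma div_le_of_le_mul (hk : 2 ≤ k) {p : ℕ} (hp : p ≤ m * k) : p / k ≤ m := by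
  calc p / k ≤ (m * k) / k := Nat.div_le_div_right hp
  _ = m := Nat.mul_div_cancel m (by omega)

lemma FF_inj (hk : 2 ≤ k) (σ : Equiv.Perm (Fin m)) : Function.Injective (FF k m σ) := by
  intro p q h
  by_cases hp : p ≤ m * k <;> by_cases hq : q ≤ m * k
  · simp only [FF] at h
    rw [if_pos hp, if_pos hq] at h
    have hpd := Nat.div_add_mod p k
    have hqd := Nat.div_add_mod q k
    have hpk := Nat.mod_lt p (show 0 < k by omega)
    have hqk := Nat.mod_lt q (show 0 < k by omega)
    have hpm := div_le_of_le_mul k m hk hp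
    have hqm := div_le_of_le_mul k m hk hq
    split_ifs at h with h1 h2 h2
    · -- both spine
      have : k * (p / k) = k * (q / k) := by rw [h]
      omega
    · -- spine vs block
      exfalso
      generalize hX : extPerm m σ (q / k) * (k - 1) = X at h
      omega
    · exfalso
      generalize hX : extPerm m σ (p / k) * (k - 1) = X at h
      omega
    · have h' : extPerm m σ (p/k) * (k-1) + (p % k - 1)
          = extPerm m σ (q/k) * (k-1) + (q % k - 1) := by omega
      have hd := blockDecode k hk (show p % k - 1 < k - 1 by omega)
        (show q % k - 1 < k - 1 by omega) h'
      have hbb : p / k = q / k := extPerm_inj m σ hd.1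
      have hmod : p % k = q % k := by omega
      have : k * (p / k) = k * (q / k) := by rw [hbb]
      omega
  · exfalso
    have h1 := FF_le k m hk σ hp
    rw [FF_tail k m σ (show m * k < q by omega)] at h
    omega
  · exfalso
    have h1 := FF_le k m hk σ hq
    rw [FF_tail k m σ (show m * k < p by omega)] at h
    omega
  · rw [FF_tail k m σ (show m * k < p by omega),
      FF_tail k m σ (show m * k < q by omega)] at h
    exact h

end Construction

section Graphs

variable {k m n : ℕ}

lemma FF_lt (hk : 2 ≤ k) (hn : m * k + 1 ≤ n) (σ : Equiv.Perm (Fin m)) {p : ℕ}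
    (hp : p < n) : FF k m σ p < n := by
  by_cases h : p ≤ m * k
  · have := FF_le k m hk σ h
    omega
  · rw [FF_tail k m σ (by omega)]
    exact hp

/-- The position-to-vertex bijection. -/
noncomputable def eqv (hk : 2 ≤ k) (hn : m * k + 1 ≤ n) (σ : Equiv.Perm (Fin m)) :
    Fin n ≃ Fin n :=
  Equiv.ofBijective (fun p => ⟨FF k m σ p.val, FF_lt hk hn σ p.isLt⟩)
    ((Finite.injective_iff_bijective).mp (fun p q h => by
      apply Fin.ext
      exact FF_inj k m hk σ (congrArg Fin.val h)))

/-- The Hamiltonian path graph associated to `σ`. -/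
noncomputable def Pg (hk : 2 ≤ k) (hn : m * k + 1 ≤ n) (σ : Equiv.Perm (Fin m)) :
    SimpleGraph (Fin n) :=
  (pathGraph n).comap (eqv hk hn σ).symm

lemma Pg_isHamPath (hk : 2 ≤ k) (hn : m * k + 1 ≤ n) (σ : Equiv.Perm (Fin m)) :
    IsHamPathGraph (Pg hk hn σ) :=
  ⟨(eqv hk hn σ).symm, fun _ _ => Iff.rfl⟩

lemma Pg_adj_nat (hk : 2 ≤ k) (hn : m * k + 1 ≤ n) (σ : Equiv.Perm (Fin m)) {p q : ℕ}
    (hpn : p < n) (hqn : q < n) (hadj : p + 1 = q ∨ q + 1 = p) :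
    (Pg hk hn σ).Adj ⟨FF k m σ p, FF_lt hk hn σ hpn⟩ ⟨FF k m σ q, FF_lt hk hn σ hqn⟩ := by
  have e1 : (⟨FF k m σ p, FF_lt hk hn σ hpn⟩ : Fin n) = eqv hk hn σ ⟨p, hpn⟩ := rfl
  have e2 : (⟨FF k m σ q, FF_lt hk hn σ hqn⟩ : Fin n) = eqv hk hn σ ⟨q, hqn⟩ := rfl
  rw [e1, e2]
  show (pathGraph n).Adj ((eqv hk hn σ).symm (eqv hk hn σ ⟨p, hpn⟩))
    ((eqv hk hn σ).symm (eqv hk hn σ ⟨q, hqn⟩))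
  rw [Equiv.symm_apply_apply, Equiv.symm_apply_apply, pathGraph_adj]
  exact hadj

end Graphs

section Cycle

variable {k m n : ℕ}

/-- The vertex sequence of the `2k`-cycle created by two paths whose blocks at
slot `i` are distinct. -/
def cyc (k i B1 B2 m : ℕ) : ℕ → ℕ := fun t =>
  if t = 0 then i
  else if t ≤ k - 1 then m + 1 + B1 * (k-1) + (t - 1)
  else if t = k then i + 1
  else if t ≤ 2*k - 1 then m + 1 + B2 * (k-1) + (2*k - 1 - t)
  else i

lemma cyc_zero (i B1 B2 m : ℕ) : cyc k i B1 B2 m 0 = i := by simp [cyc]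

lemma cyc_bσ (hk : 2 ≤ k) (i B1 B2 m : ℕ) {t : ℕ} (h1 : 1 ≤ t) (h2 : t ≤ k - 1) :
    cyc k i B1 B2 m t = m + 1 + B1 * (k-1) + (t - 1) := by
  rw [cyc, if_neg (by omega), if_pos h2]

lemma cyc_mid (hk : 2 ≤ k) (i B1 B2 m : ℕ) : cyc k i B1 B2 m k = i + 1 := by
  rw [cyc, if_neg (by omega), if_neg (by omega), if_pos rfl]

lemma cyc_bτ (hk : 2 ≤ k) (i B1 B2 m : ℕ) {t : ℕ} (h1 : k + 1 ≤ t) (h2 : t ≤ 2*k - 1) :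
    cyc k i B1 B2 m t = m + 1 + B2 * (k-1) + (2*k - 1 - t) := by
  rw [cyc, if_neg (by omega), if_neg (by omega), if_neg (by omega), if_pos h2]

lemma cyc_last (hk : 2 ≤ k) (i B1 B2 m : ℕ) : cyc k i B1 B2 m (2*k) = i := by
  rw [cyc, if_neg (by omega), if_neg (by omega), if_neg (by omega), if_neg (by omega)]

lemma le_blk (m B j : ℕ) : m + 1 ≤ m + 1 + B + j :=
  le_trans (Nat.le_add_right _ _) (Nat.le_add_right _ _)

lemma pair_cycle (hk : 2 ≤ k) (hn : m * k + 1 ≤ n) (σ τ : Equiv.Perm (Fin m)) {i : ℕ}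
    (hi : i < m) (hne : extPerm m σ i ≠ extPerm m τ i) :
    ContainsCycleLen ((Pg hk hn σ) ⊔ (Pg hk hn τ)) (2 * k) := by
  have hB1 : extPerm m σ i < m := extPerm_lt m σ hi
  have hB2 : extPerm m τ i < m := extPerm_lt m τ hi
  have hmk : m ≤ m * k := Nat.le_mul_of_pos_right m (by omega)
  have hki : k * (i+1) ≤ m * k := by
    rw [mul_comm m k]; exact Nat.mul_le_mul_left k hi
  have hki' : k * (i+1) = k * i + k := by ring
  have hbound : ∀ t, cyc k i (extPerm m σ i) (extPerm m τ i) m t < n := by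
    intro t
    rw [cyc]
    split_ifs with hc1 hc2 hc3 hc4
    · omega
    · have := FF_block_le k m hk hB1 (show t - 1 ≤ k - 2 by omega)
      omega
    · omega
    · have := FF_block_le k m hk hB2 (show 2*k - 1 - t ≤ k - 2 by omega)
      omega
    · omega
  set g : ℕ → Fin n := fun t => ⟨cyc k i (extPerm m σ i) (extPerm m τ i) m t, hbound t⟩
    with hg
  have key : ∀ (ρ : Equiv.Perm (Fin m)) (p q : ℕ) (hpn : p < n) (hqn : q < n) (a b : Fin n),
      FF k m ρ p = a.val → FF k m ρ q = b.val → (p + 1 = q ∨ q + 1 = p) →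
      (Pg hk hn ρ).Adj a b := by
    intro ρ p q hpn hqn a b h1 h2 hadj
    have H := Pg_adj_nat hk hn ρ hpn hqn hadj
    rwa [show (⟨FF k m ρ p, FF_lt hk hn ρ hpn⟩ : Fin n) = a from Fin.ext h1,
      show (⟨FF k m ρ q, FF_lt hk hn ρ hqn⟩ : Fin n) = b from Fin.ext h2] at H
  have hadjall : ∀ t, t < 2*k → ((Pg hk hn σ) ⊔ (Pg hk hn τ)).Adj (g t) (g (t+1)) := by
    intro t ht
    rcases (show t = 0 ∨ (1 ≤ t ∧ t ≤ k-2) ∨ t = k-1 ∨ t = k ∨ (k+1 ≤ t ∧ t ≤ 2*k-2)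
        ∨ t = 2*k-1 by omega) with h | h | h | h | h | h
    · subst h
      refine (sup_adj _ _ _ _).mpr (Or.inl (key σ (k*i) (k*i+1) (by omega) (by omega) _ _ ?_ ?_
        (Or.inl rfl)))
      · show FF k m σ (k*i) = cyc k i (extPerm m σ i) (extPerm m τ i) m 0
        rw [FF_spine k m hk σ hi.le, cyc_zero]
      · show FF k m σ (k*i+1) = cyc k i (extPerm m σ i) (extPerm m τ i) m 1
        have hb := FF_block k m hk σ hi (show 0 ≤ k - 2 by omega)
        rw [show k*i+1+0 = k*i+1 from rfl] at hb
        rw [hb, cyc_bσ hk _ _ _ _ le_rfl (by omega)]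
    · refine (sup_adj _ _ _ _).mpr (Or.inl (key σ (k*i+1+(t-1)) (k*i+1+t) (by omega) (by omega)
        _ _ ?_ ?_ (Or.inl (by omega))))
      · show FF k m σ (k*i+1+(t-1)) = cyc k i (extPerm m σ i) (extPerm m τ i) m t
        rw [FF_block k m hk σ hi (show t-1 ≤ k - 2 by omega),
          cyc_bσ hk _ _ _ _ h.1 (by omega)]
      · show FF k m σ (k*i+1+t) = cyc k i (extPerm m σ i) (extPerm m τ i) m (t+1)
        rw [FF_block k m hk σ hi (show t ≤ k - 2 by omega),
          cyc_bσ hk _ _ _ _ (by omega) (by omega)]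
        omega
    · subst h
      refine (sup_adj _ _ _ _).mpr (Or.inl (key σ (k*i+1+(k-2)) (k*(i+1)) (by omega) (by omega)
        _ _ ?_ ?_ (Or.inl (by omega))))
      · show FF k m σ (k*i+1+(k-2)) = cyc k i (extPerm m σ i) (extPerm m τ i) m (k-1)
        rw [FF_block k m hk σ hi le_rfl, cyc_bσ hk _ _ _ _ (by omega) le_rfl]
        omega
      · show FF k m σ (k*(i+1)) = cyc k i (extPerm m σ i) (extPerm m τ i) m (k-1+1)
        rw [FF_spine k m hk σ (by omega), show k-1+1 = k by omega, cyc_mid hk]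
    · rw [h]
      refine (sup_adj _ _ _ _).mpr (Or.inr (key τ (k*(i+1)) (k*i+1+(k-2)) (by omega) (by omega)
        _ _ ?_ ?_ (Or.inr (by omega))))
      · show FF k m τ (k*(i+1)) = cyc k i (extPerm m σ i) (extPerm m τ i) m k
        rw [FF_spine k m hk τ (by omega), cyc_mid hk]
      · show FF k m τ (k*i+1+(k-2)) = cyc k i (extPerm m σ i) (extPerm m τ i) m (k+1)
        rw [FF_block k m hk τ hi le_rfl, cyc_bτ hk _ _ _ _ le_rfl (by omega)]
        omega
    · refine (sup_adj _ _ _ _).mpr (Or.inr (key τ (k*i+1+(2*k-1-t)) (k*i+1+(2*k-2-t))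
        (by omega) (by omega) _ _ ?_ ?_ (Or.inr (by omega))))
      · show FF k m τ (k*i+1+(2*k-1-t)) = cyc k i (extPerm m σ i) (extPerm m τ i) m t
        rw [FF_block k m hk τ hi (show 2*k-1-t ≤ k - 2 by omega),
          cyc_bτ hk _ _ _ _ (by omega) (by omega)]
      · show FF k m τ (k*i+1+(2*k-2-t)) = cyc k i (extPerm m σ i) (extPerm m τ i) m (t+1)
        rw [FF_block k m hk τ hi (show 2*k-2-t ≤ k - 2 by omega),
          cyc_bτ hk _ _ _ _ (by omega) (by omega)]
        omega
    · subst h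
      refine (sup_adj _ _ _ _).mpr (Or.inr (key τ (k*i+1) (k*i) (by omega) (by omega) _ _ ?_ ?_
        (Or.inr rfl)))
      · show FF k m τ (k*i+1) = cyc k i (extPerm m σ i) (extPerm m τ i) m (2*k-1)
        have hb := FF_block k m hk τ hi (show 0 ≤ k - 2 by omega)
        rw [show k*i+1+0 = k*i+1 from rfl] at hb
        rw [hb, cyc_bτ hk _ _ _ _ (by omega) le_rfl]
        omega
      · show FF k m τ (k*i) = cyc k i (extPerm m σ i) (extPerm m τ i) m (2*k-1+1)
        rw [FF_spine k m hk τ hi.le, show 2*k-1+1 = 2*k by omega, cyc_last hk]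
  have hclosed : g (2*k) = g 0 := by
    apply Fin.ext
    show cyc k i (extPerm m σ i) (extPerm m τ i) m (2*k) = cyc k i (extPerm m σ i) (extPerm m τ i) m 0
    rw [cyc_last hk, cyc_zero]
  have hinj : ∀ t1 t2, 1 ≤ t1 → t1 ≤ 2*k → 1 ≤ t2 → t2 ≤ 2*k → g t1 = g t2 → t1 = t2 := by
    intro t1 t2 h11 h12 h21 h22 heq
    have hv : cyc k i (extPerm m σ i) (extPerm m τ i) m t1
        = cyc k i (extPerm m σ i) (extPerm m τ i) m t2 := congrArg Fin.val heq
    rcases (show (1 ≤ t1 ∧ t1 ≤ k-1) ∨ t1 = k ∨ (k+1 ≤ t1 ∧ t1 ≤ 2*k-1) ∨ t1 = 2*k by omega)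
      with h1 | h1 | h1 | h1 <;>
    rcases (show (1 ≤ t2 ∧ t2 ≤ k-1) ∨ t2 = k ∨ (k+1 ≤ t2 ∧ t2 ≤ 2*k-1) ∨ t2 = 2*k by omega)
      with h2 | h2 | h2 | h2
    · rw [cyc_bσ hk _ _ _ _ h1.1 h1.2, cyc_bσ hk _ _ _ _ h2.1 h2.2] at hv
      have := Nat.add_left_cancel hv
      omega
    · exfalso
      rw [h2, cyc_bσ hk _ _ _ _ h1.1 h1.2, cyc_mid hk] at hv
      have := le_blk m (extPerm m σ i * (k-1)) (t1 - 1)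
      omega
    · exfalso
      rw [cyc_bσ hk _ _ _ _ h1.1 h1.2, cyc_bτ hk _ _ _ _ h2.1 h2.2] at hv
      have hd := blockDecode k hk (b1 := extPerm m σ i) (b2 := extPerm m τ i)
        (show t1 - 1 < k-1 by omega) (show 2*k-1-t2 < k-1 by omega) (by omega)
      exact hne hd.1
    · exfalso
      subst h2
      rw [cyc_bσ hk _ _ _ _ h1.1 h1.2, cyc_last hk] at hv
      have := le_blk m (extPerm m σ i * (k-1)) (t1 - 1)
      omega
    · exfalso
      rw [h1, cyc_mid hk, cyc_bσ hk _ _ _ _ h2.1 h2.2] at hv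
      have := le_blk m (extPerm m σ i * (k-1)) (t2 - 1)
      omega
    · omega
    · exfalso
      rw [h1, cyc_mid hk, cyc_bτ hk _ _ _ _ h2.1 h2.2] at hv
      have := le_blk m (extPerm m τ i * (k-1)) (2*k-1-t2)
      omega
    · rw [h1, h2, cyc_mid hk, cyc_last hk] at hv
      omega
    · exfalso
      rw [cyc_bτ hk _ _ _ _ h1.1 h1.2, cyc_bσ hk _ _ _ _ h2.1 h2.2] at hv
      have hd := blockDecode k hk (b1 := extPerm m τ i) (b2 := extPerm m σ i)
        (show 2*k-1-t1 < k-1 by omega) (show t2 - 1 < k-1 by omega) (by omega)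
      exact hne hd.1.symm
    · exfalso
      rw [h2, cyc_bτ hk _ _ _ _ h1.1 h1.2, cyc_mid hk] at hv
      have := le_blk m (extPerm m τ i * (k-1)) (2*k-1-t1)
      omega
    · rw [cyc_bτ hk _ _ _ _ h1.1 h1.2, cyc_bτ hk _ _ _ _ h2.1 h2.2] at hv
      have := Nat.add_left_cancel hv
      omega
    · exfalso
      subst h2
      rw [cyc_bτ hk _ _ _ _ h1.1 h1.2, cyc_last hk] at hv
      have := le_blk m (extPerm m τ i * (k-1)) (2*k-1-t1)
      omega
    · exfalso
      subst h1
      rw [cyc_last hk, cyc_bσ hk _ _ _ _ h2.1 h2.2] at hv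
      have := le_blk m (extPerm m σ i * (k-1)) (t2 - 1)
      omega
    · rw [h1, h2, cyc_last hk, cyc_mid hk] at hv
      omega
    · exfalso
      subst h1
      rw [cyc_last hk, cyc_bτ hk _ _ _ _ h2.1 h2.2] at hv
      have := le_blk m (extPerm m τ i * (k-1)) (2*k-1-t2)
      omega
    · omega
  obtain ⟨w, hw1, hw2⟩ := exists_cycle_of_seq g (2*k) (by omega) hadjall hclosed hinj
  exact ⟨g 0, w, hw1, hw2⟩

end Cycle

section Family

variable {k m n : ℕ}

lemma exists_ne_ext {σ τ : Equiv.Perm (Fin m)} (h : σ ≠ τ) :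
    ∃ i, i < m ∧ extPerm m σ i ≠ extPerm m τ i := by
  have hx : ∃ x : Fin m, σ x ≠ τ x := by
    by_contra hc
    push_neg at hc
    exact h (Equiv.ext hc)
  obtain ⟨x, hx⟩ := hx
  refine ⟨x.val, x.isLt, ?_⟩
  simp only [extPerm, dif_pos x.isLt, Fin.eta]
  intro hval
  exact hx (Fin.ext hval)

lemma Pg_injective (hk : 2 ≤ k) (hn : m * k + 1 ≤ n) :
    Function.Injective (fun σ : Equiv.Perm (Fin m) => Pg hk hn σ) := by
  intro σ τ h
  simp only at h
  have claim : ∀ p : ℕ, ∀ hp : p < n, FF k m σ p = FF k m τ p := by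
    intro p
    induction p using Nat.strong_induction_on with
    | _ p IH =>
      intro hp
      cases p with
      | zero =>
        have a := FF_spine k m hk σ (Nat.zero_le m)
        have b := FF_spine k m hk τ (Nat.zero_le m)
        rw [Nat.mul_zero] at a b
        rw [a, b]
      | succ p' =>
        have h1 : p' < n := by omega
        have e_p : FF k m σ p' = FF k m τ p' := IH p' (by omega) h1
        have A1 : (Pg hk hn σ).Adj (eqv hk hn σ ⟨p', h1⟩) (eqv hk hn σ ⟨p'+1, hp⟩) := by
          simp only [Pg, comap_adj, Equiv.symm_apply_apply, pathGraph_adj, Fin.val_mk]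
          exact Or.inl trivial
        rw [h] at A1
        have e1 : eqv hk hn σ ⟨p', h1⟩ = eqv hk hn τ ⟨p', h1⟩ := Fin.ext e_p
        rw [e1] at A1
        simp only [Pg, comap_adj, Equiv.symm_apply_apply, pathGraph_adj, Fin.val_mk] at A1
        rcases A1 with hA | hA
        · have hq : (eqv hk hn τ).symm (eqv hk hn σ ⟨p'+1, hp⟩) = ⟨p'+1, hp⟩ :=
            Fin.ext hA.symm
          have hv : eqv hk hn σ ⟨p'+1, hp⟩ = eqv hk hn τ ⟨p'+1, hp⟩ := by
            conv_lhs => rw [← Equiv.apply_symm_apply (eqv hk hn τ) (eqv hk hn σ ⟨p'+1, hp⟩)]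
            rw [hq]
          exact congrArg Fin.val hv
        · exfalso
          set r := ((eqv hk hn τ).symm (eqv hk hn σ ⟨p'+1, hp⟩)) with hrd
          have e2 : FF k m σ r.val = FF k m τ r.val := IH r.val (by omega) r.isLt
          have e3 : eqv hk hn τ r = eqv hk hn σ r := (Fin.ext e2).symm
          have hv : eqv hk hn σ ⟨p'+1, hp⟩ = eqv hk hn τ r := (Equiv.apply_symm_apply _ _).symm
          rw [e3] at hv
          have e4 := congrArg Fin.val ((eqv hk hn σ).injective hv)
          rw [Fin.val_mk] at e4
          omega
  apply Equiv.ext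
  intro x
  have hxm : (x : ℕ) < m := x.isLt
  have hki : k * (x.val+1) ≤ m * k := by
    rw [mul_comm m k]; exact Nat.mul_le_mul_left k hxm
  have hki' : k * (x.val+1) = k * x.val + k := by ring
  have hpos : k * x.val + 1 < n := by omega
  have hc := claim (k * x.val + 1) hpos
  have b1 := FF_block k m hk σ hxm (show 0 ≤ k-2 by omega)
  have b2 := FF_block k m hk τ hxm (show 0 ≤ k-2 by omega)
  rw [show k*x.val+1+0 = k*x.val+1 from rfl] at b1 b2
  rw [b1, b2] at hc
  have hd := blockDecode k hk (b1 := extPerm m σ x.val) (b2 := extPerm m τ x.val)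
    (show 0 < k - 1 by omega) (show 0 < k - 1 by omega) (by omega)
  have := hd.1
  simp only [extPerm, dif_pos hxm, Fin.eta] at this
  exact Fin.ext this

lemma factorial_le_Hnum (hk : 2 ≤ k) (hn : m * k + 1 ≤ n) :
    m.factorial ≤ Hnum n (2*k) := by
  classical
  set F : Finset (SimpleGraph (Fin n)) :=
    Finset.univ.image (fun σ : Equiv.Perm (Fin m) => Pg hk hn σ) with hF
  have hcard : F.card = m.factorial := by
    rw [hF, Finset.card_image_of_injective _ (Pg_injective hk hn), Finset.card_univ,
      Fintype.card_perm, Fintype.card_fin]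
  have hmem : m.factorial ∈ {N | ∃ F : Finset (SimpleGraph (Fin n)), F.card = N ∧
      (∀ G ∈ F, IsHamPathGraph G) ∧
      ∀ G₁ ∈ F, ∀ G₂ ∈ F, G₁ ≠ G₂ → ContainsCycleLen (G₁ ⊔ G₂) (2*k)} := by
    refine ⟨F, hcard, ?_, ?_⟩
    · intro G hG
      rw [hF, Finset.mem_image] at hG
      obtain ⟨σ, _, rfl⟩ := hG
      exact Pg_isHamPath hk hn σ
    · intro G₁ hG₁ G₂ hG₂ hne
      rw [hF, Finset.mem_image] at hG₁ hG₂
      obtain ⟨σ, _, rfl⟩ := hG₁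
      obtain ⟨τ, _, rfl⟩ := hG₂
      have hst : σ ≠ τ := fun hc => hne (by rw [hc])
      obtain ⟨i, hi, hne'⟩ := exists_ne_ext hst
      exact pair_cycle hk hn σ τ hi hne'
  refine le_csSup ⟨Fintype.card (SimpleGraph (Fin n)), ?_⟩ hmem
  rintro N ⟨F', hF', -⟩
  rw [← hF']
  exact Finset.card_le_univ F'

end Family

section Analysis

lemma pow_sub_le_factorial : ∀ (M t : ℕ), t ≤ M → t ^ (M - t) ≤ M.factorial := by
  intro M
  induction M with
  | zero =>
      intro t ht
      have : t = 0 := by omega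
      subst this
      simp
  | succ M ih =>
      intro t ht
      rcases eq_or_lt_of_le ht with rfl | h
      · rw [Nat.sub_self, pow_zero]
        exact Nat.factorial_pos _
      · have h1 : t ≤ M := by omega
        have h2 : M + 1 - t = (M - t) + 1 := by omega
        rw [h2, pow_succ]
        calc t ^ (M-t) * t ≤ M.factorial * (M+1) := Nat.mul_le_mul (ih t h1) (by omega)
        _ = (M+1).factorial := by rw [Nat.factorial_succ]; ring

set_option maxHeartbeats 1000000 in
theorem stmt_8_aux (k : ℕ) (hk : 2 ≤ k) :
    ∀ ε : ℝ, 0 < ε → ∃ N : ℕ, ∀ n : ℕ, N ≤ n →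
      (n : ℝ) ^ ((1 / (k : ℝ) - ε) * n) ≤ (Hnum n (2 * k) : ℝ) := by
  intro ε hε
  have hk0 : (0:ℝ) < k := by exact_mod_cast (by omega : 0 < k)
  have hkr : (2:ℝ) ≤ k := by exact_mod_cast hk
  set ε' : ℝ := min ε (1/(2*k)) with hε'def
  have hε'pos : 0 < ε' := lt_min hε (by positivity)
  have hε'le : ε' ≤ 1/(2*k) := min_le_right _ _
  have hε'ε : ε' ≤ ε := min_le_left _ _
  have ha0 : 0 < ε' * k := by positivity
  have ha2 : ε' * k ≤ 1/2 := by
    have h := mul_le_mul_of_nonneg_right hε'le hk0.le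
    calc ε' * (k:ℝ) ≤ (1/(2*k))*k := h
    _ = 1/2 := by field_simp
  obtain ⟨j, hj⟩ : ∃ j : ℕ, 2/(ε'*k) < (2:ℝ)^j := pow_unbounded_of_one_lt _ one_lt_two
  have hD : (0:ℝ) < (k:ℝ) * 2^(j+2) := by positivity
  set C : ℝ := Real.log ((k:ℝ) * 2^(j+2)) with hC
  have hC0 : 0 ≤ C := Real.log_nonneg (by
    have h1 : (1:ℝ) ≤ 2^(j+2) := one_le_pow₀ (by norm_num)
    nlinarith [h1, hkr])
  set N : ℕ := max (k * 2^(j+2)) (max (⌈Real.exp (4*C/(ε'*k))⌉₊ + 1) (⌈(4:ℝ)/ε'⌉₊ + 1)) with hN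
  refine ⟨N, ?_⟩
  intro n hn
  have hn1 : k * 2^(j+2) ≤ n := le_trans (le_max_left _ _) hn
  have h2p : 0 < 2^(j+2) := Nat.pow_pos (by norm_num)
  have h2j : (0:ℕ) < 2^j := Nat.pow_pos (by norm_num)
  have hn2' : ⌈Real.exp (4*C/(ε'*k))⌉₊ + 1 ≤ n :=
    le_trans (le_trans (le_max_left _ _) (le_max_right _ _)) hn
  have hn3' : ⌈(4:ℝ)/ε'⌉₊ + 1 ≤ n :=
    le_trans (le_trans (le_max_right _ _) (le_max_right _ _)) hn
  have hn2 : Real.exp (4*C/(ε'*k)) ≤ n := by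
    calc Real.exp (4*C/(ε'*k)) ≤ (⌈Real.exp (4*C/(ε'*k))⌉₊ : ℝ) := Nat.le_ceil _
    _ ≤ n := by exact_mod_cast (by omega : ⌈Real.exp (4*C/(ε'*k))⌉₊ ≤ n)
  have hn3 : (4:ℝ)/ε' ≤ n := by
    calc (4:ℝ)/ε' ≤ (⌈(4:ℝ)/ε'⌉₊ : ℝ) := Nat.le_ceil _
    _ ≤ n := by exact_mod_cast (by omega : ⌈(4:ℝ)/ε'⌉₊ ≤ n)
  have hnge2 : 2 ≤ n := by
    have : 2*1 ≤ k*2^(j+2) := Nat.mul_le_mul hk h2p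
    omega
  have hnr0 : (0:ℝ) < n := by exact_mod_cast (by omega : 0 < n)
  have hnr1 : (1:ℝ) ≤ n := by exact_mod_cast (by omega : 1 ≤ n)
  set m : ℕ := (n-1)/k with hm
  set t : ℕ := m / 2^j with ht
  have hd1 := Nat.div_add_mod (n-1) k
  rw [← hm] at hd1
  have hr1 : (n-1) % k < k := Nat.mod_lt _ (by omega)
  have hd2 := Nat.div_add_mod m (2^j)
  rw [← ht] at hd2
  have hr2 : m % 2^j < 2^j := Nat.mod_lt _ h2j
  have hmk' : m*k = k*m := mul_comm m k
  have hmn : m * k + 1 ≤ n := by omega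
  have hm_low : 2^(j+1) ≤ m := by
    have e : k * 2^(j+2) = k*2^(j+1) + k*2^(j+1) := by ring
    have e2 : k ≤ k * 2^(j+1) := Nat.le_mul_of_pos_right k (Nat.pow_pos (by norm_num))
    have h1 : k * 2^(j+1) ≤ k * m := by omega
    exact Nat.le_of_mul_le_mul_left h1 (by omega)
  have htm : t ≤ m := Nat.div_le_self m _
  have ht_low : 2 ≤ t := by
    have h1 : 2^(j+1) / 2^j ≤ t := Nat.div_le_div_right hm_low
    have h2 : 2^(j+1) = 2^j * 2 := by ring
    rwa [h2, Nat.mul_div_cancel_left 2 h2j] at h1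
  -- key nat bound : n ≤ k * 2^(j+2) * t
  have hnat : n ≤ k * 2^(j+2) * t := by
    have a2' : m + 1 ≤ 2^j * t + 2^j := by omega
    have a3 : k*(m+1) ≤ k*(2^j*t + 2^j) := Nat.mul_le_mul_left k a2'
    have e1 : k*(2^j*t + 2^j) = k*2^j*t + k*2^j := by ring
    have e2 : k*(m+1) = k*m + k := by ring
    have a4 : k*2^j ≤ k*2^j*t := Nat.le_mul_of_pos_right _ (by omega)
    have e3 : k*2^(j+2)*t = 4*(k*2^j*t) := by ring
    omega
  -- real facts
  set L : ℝ := Real.log n with hL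
  have hL0 : 0 ≤ L := Real.log_nonneg hnr1
  have haL : 4*C ≤ (ε'*k)*L := by
    have := Real.log_le_log (Real.exp_pos _) hn2
    rw [Real.log_exp] at this
    rw [div_le_iff₀ ha0] at this
    linarith [this]
  have han : 4*(k:ℝ) ≤ (ε'*k)*n := by
    rw [div_le_iff₀ hε'pos] at hn3
    have h := mul_le_mul_of_nonneg_right hn3 hk0.le
    linarith [h]
  have hLC0 : 0 ≤ L - C := by
    nlinarith [haL, hC0, hL0, mul_nonneg (show (0:ℝ) ≤ 1/2 - ε'*k by linarith) hL0]
  have hkm_real : (n:ℝ) ≤ (k:ℝ)*m + k := by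
    have : n ≤ k*m + k := by omega
    exact_mod_cast this
  have hTup : (2:ℝ)^j * t ≤ m := by
    have : 2^j * t ≤ m := by omega
    exact_mod_cast this
  have hq1 : (m:ℝ)*(1 - ε'*k/2) ≤ (m:ℝ) - t := by
    have b1 : (2:ℝ) ≤ ε'*k*2^j := by
      rw [div_lt_iff₀ ha0] at hj
      linarith [hj]
    have ht0 : (0:ℝ) ≤ t := Nat.cast_nonneg t
    have b2 : (2:ℝ)*t ≤ (ε'*k*2^j)*t := mul_le_mul_of_nonneg_right b1 ht0
    have b3 : (ε'*k)*((2:ℝ)^j*t) ≤ (ε'*k)*m := mul_le_mul_of_nonneg_left hTup ha0.le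
    linarith [b2, b3]
  have hmt0 : (0:ℝ) ≤ (m:ℝ) - t := by
    have : (t:ℝ) ≤ m := by exact_mod_cast htm
    linarith
  have htr0 : (0:ℝ) < t := by exact_mod_cast (by omega : 0 < t)
  have hLClogt : L - C ≤ Real.log t := by
    have harg : (n:ℝ) / ((k:ℝ) * 2^(j+2)) ≤ t := by
      rw [div_le_iff₀ hD]
      calc (n:ℝ) ≤ (k * 2^(j+2) * t : ℕ) := by exact_mod_cast hnat
      _ = (t:ℝ) * ((k:ℝ)*2^(j+2)) := by push_cast; ring
    calc L - C = Real.log ((n:ℝ)/((k:ℝ)*2^(j+2))) := by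
          rw [Real.log_div (by positivity) (by positivity)]
    _ ≤ Real.log t := Real.log_le_log (by positivity) harg
  -- the main inequality
  have hmain : (1/(k:ℝ) - ε') * n * L ≤ ((m:ℝ) - t) * Real.log t := by
    have step1 : (m:ℝ)*(1 - ε'*k/2)*(L - C) ≤ ((m:ℝ) - t)*Real.log t :=
      mul_le_mul hq1 hLClogt hLC0 hmt0
    have hfac0 : (0:ℝ) ≤ (1 - ε'*k/2)*(L - C) := mul_nonneg (by linarith) hLC0
    have step2 : (1 - ε'*k/2)*((n:ℝ) - k)*(L - C) ≤ (k:ℝ)*((m:ℝ)*(1 - ε'*k/2)*(L-C)) := by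
      have := mul_le_mul_of_nonneg_left (show (n:ℝ) - k ≤ k*m by linarith) hfac0
      linarith [this]
    have step3 : (1 - ε'*k)*(n:ℝ)*L ≤ (1 - ε'*k/2)*((n:ℝ) - k)*(L-C) := by
      have hX : (0:ℝ) ≤ n*C + k*L - k*C := by
        linarith [mul_nonneg hnr0.le hC0, mul_nonneg hk0.le hLC0]
      have h1 : (1-ε'*k/2)*((n:ℝ)*C + k*L - k*C) ≤ (n:ℝ)*C + k*L - k*C := by
        have := mul_nonneg ha0.le hX
        linarith [this]
      have h2 : (n:ℝ)*C ≤ (ε'*k/4)*((n:ℝ)*L) := by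
        have := mul_le_mul_of_nonneg_left haL hnr0.le
        linarith [this]
      have h3 : (k:ℝ)*L ≤ (ε'*k/4)*((n:ℝ)*L) := by
        have := mul_le_mul_of_nonneg_left han hL0
        linarith [this]
      linarith [h1, h2, h3, mul_nonneg hk0.le hC0]
    have hdiv : (k:ℝ)*((1/(k:ℝ) - ε') * n * L) = (1 - ε'*k)*(n:ℝ)*L := by
      have e : (k:ℝ) * (1/(k:ℝ)) = 1 := by field_simp
      linear_combination ((n:ℝ)*L) * e
    have : (k:ℝ)*((1/(k:ℝ) - ε') * n * L) ≤ (k:ℝ)*(((m:ℝ) - t) * Real.log t) := by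
      rw [hdiv]
      calc (1 - ε'*k)*(n:ℝ)*L ≤ (1 - ε'*k/2)*((n:ℝ) - k)*(L-C) := step3
      _ ≤ (k:ℝ)*((m:ℝ)*(1 - ε'*k/2)*(L-C)) := step2
      _ ≤ (k:ℝ)*(((m:ℝ) - t) * Real.log t) := by
          exact mul_le_mul_of_nonneg_left step1 hk0.le
    exact le_of_mul_le_mul_left this hk0
  -- assemble
  have hfac : ((t:ℝ)) ^ (m - t) ≤ (m.factorial : ℝ) := by
    exact_mod_cast pow_sub_le_factorial m t htm
  have hHnum : (m.factorial : ℝ) ≤ (Hnum n (2*k) : ℝ) := by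
    exact_mod_cast factorial_le_Hnum hk hmn
  have hmono : (n:ℝ) ^ ((1/(k:ℝ) - ε)*n) ≤ (n:ℝ) ^ ((1/(k:ℝ) - ε')*n) := by
    apply Real.rpow_le_rpow_of_exponent_le hnr1
    have h : (1/(k:ℝ) - ε) ≤ (1/(k:ℝ) - ε') := by linarith
    exact mul_le_mul_of_nonneg_right h hnr0.le
  have h2 : (n:ℝ) ^ ((1/(k:ℝ) - ε')*n) ≤ (m.factorial : ℝ) := by
    rw [Real.rpow_def_of_pos hnr0]
    have hfacpos : (0:ℝ) < (m.factorial : ℝ) := by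
      exact_mod_cast m.factorial_pos
    rw [← Real.exp_log hfacpos, Real.exp_le_exp]
    have hlogfac : ((m:ℝ) - t) * Real.log t ≤ Real.log (m.factorial : ℝ) := by
      have h1 : Real.log ((t:ℝ)^(m-t)) ≤ Real.log (m.factorial : ℝ) :=
        Real.log_le_log (by positivity) hfac
      rw [Real.log_pow] at h1
      have hc : ((m - t : ℕ):ℝ) = (m:ℝ) - t := Nat.cast_sub htm
      rw [hc] at h1
      exact h1
    calc L * ((1/(k:ℝ) - ε')*n) = (1/(k:ℝ) - ε')*n*L := by ring
    _ ≤ ((m:ℝ) - t) * Real.log t := hmain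
    _ ≤ Real.log (m.factorial : ℝ) := hlogfac
  exact hmono.trans (h2.trans hHnum)

end Analysis

/-- Lower bound: `H(n,2k) ≥ n^((1/k)n - o(n))` for every `k ≥ 2`. -/
theorem stmt_8 (k : ℕ) (hk : 2 ≤ k) :
    ∀ ε : ℝ, 0 < ε → ∃ N : ℕ, ∀ n : ℕ, N ≤ n →
      (n : ℝ) ^ ((1 / (k : ℝ) - ε) * n) ≤ (Hnum n (2 * k) : ℝ) := by
  exact stmt_8_aux k hk
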